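/- Let H be a Hilbert space, A a strongly positive bounded linear self-adjoint operator with coefficient γ̄ > 0, f an α-contraction, 0 < γ < γ̄/α, and T nonexpansive with F(T) ≠ ∅. For t ∈ (0, ‖A‖⁻¹) let x_t be the unique fixed point of x ↦ tγf(x) + (I − tA)Tx. Then x_t converges strongly as t → 0 to a fixed point x̄ of T that solves the variational inequality ⟨(A − γf)x̄, x̄ − z⟩ ≤ 0 for all z ∈ F(T). -/

import Mathlib

open scoped RealInnerProductSpace
open Filter
open Topology

section AuxVisc
variable {H : Type*} [NormedAddCommGroup H] [InnerProductSpace ℝ H] [CompleteSpace H]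

lemma cs_sym (B : H →L[ℝ] H) (hsym : ∀ u v : H, ⟪B u, v⟫ = ⟪u, B v⟫)
    (h0 : ∀ w : H, 0 ≤ ⟪B w, w⟫) (u v : H) :
    ⟪B u, v⟫ ^ 2 ≤ ⟪B u, u⟫ * ⟪B v, v⟫ := by
  have key : ∀ t : ℝ, 0 ≤ ⟪B v, v⟫ * (t * t) + (2 * ⟪B u, v⟫) * t + ⟪B u, u⟫ := by
    intro t
    have h := h0 (u + t • v)
    have hexp : ⟪B (u + t • v), u + t • v⟫
        = ⟪B u, u⟫ + t * ⟪B u, v⟫ + (t * ⟪B v, u⟫ + t * t * ⟪B v, v⟫) := by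
      simp only [map_add, map_smul, inner_add_left, inner_add_right,
        real_inner_smul_left, real_inner_smul_right]
      ring
    have hsv : ⟪B v, u⟫ = ⟪B u, v⟫ := by
      rw [hsym v u, real_inner_comm]
    rw [hexp, hsv] at h
    nlinarith [h]
  have hd := discrim_le_zero key
  rw [discrim] at hd
  nlinarith [hd]

lemma norm_le_of_form (B : H →L[ℝ] H) (hsym : ∀ u v : H, ⟪B u, v⟫ = ⟪u, B v⟫)
    (h0 : ∀ w : H, 0 ≤ ⟪B w, w⟫) {c : ℝ} (hc0 : 0 ≤ c)
    (hc : ∀ w : H, ⟪B w, w⟫ ≤ c * ‖w‖ ^ 2) (w : H) : ‖B w‖ ≤ c * ‖w‖ := by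
  have h1 : ⟪B w, B w⟫ ^ 2 ≤ ⟪B w, w⟫ * ⟪B (B w), B w⟫ := cs_sym B hsym h0 w (B w)
  rw [real_inner_self_eq_norm_sq] at h1
  have h3 := hc w
  have h4 := hc (B w)
  have h5 := h0 w
  rcases eq_or_lt_of_le (norm_nonneg (B w)) with h|h
  · rw [← h]; positivity
  · have h6 : ⟪B w, w⟫ * ⟪B (B w), B w⟫ ≤ (c * ‖w‖ ^ 2) * (c * ‖B w‖ ^ 2) := by
      apply mul_le_mul h3 h4 (h0 (B w)) (by positivity)
    have h7 : (‖B w‖ ^ 2) ^ 2 ≤ (c * ‖w‖ ^ 2) * (c * ‖B w‖ ^ 2) := le_trans h1 h6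
    have hb : 0 ≤ c * ‖w‖ := by positivity
    by_contra hcon
    push_neg at hcon
    have hsq : (c * ‖w‖) ^ 2 < ‖B w‖ ^ 2 := by nlinarith
    nlinarith [mul_pos h h]

lemma weak_subseq (x : ℕ → H) (M : ℝ) (hM : ∀ n, ‖x n‖ ≤ M) :
    ∃ φ : ℕ → ℕ, StrictMono φ ∧ ∃ q : H,
      ∀ y : H, Tendsto (fun n => ⟪y, x (φ n)⟫) atTop (𝓝 ⟪y, q⟫) := by
  have hM0 : 0 ≤ M := le_trans (norm_nonneg _) (hM 0)
  -- diagonal extraction via compactness of [-M²,M²]^ℕ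
  set u : ℕ → ℕ → ℝ := fun n m => ⟪x m, x n⟫ with hu_def
  have hu : ∀ n, u n ∈ Set.univ.pi (fun _ : ℕ => Set.Icc (-(M*M)) (M*M)) := by
    intro n m _
    have := abs_real_inner_le_norm (x m) (x n)
    have h2 : ‖x m‖ * ‖x n‖ ≤ M * M :=
      mul_le_mul (hM m) (hM n) (norm_nonneg _) hM0
    constructor
    · have := abs_le.mp (le_trans (abs_real_inner_le_norm (x m) (x n)) h2)
      exact this.1
    · exact le_trans (le_abs_self _) (le_trans (abs_real_inner_le_norm _ _) h2)
  have hcomp : IsCompact (Set.univ.pi fun _ : ℕ => Set.Icc (-(M*M)) (M*M)) :=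
    isCompact_univ_pi fun _ => isCompact_Icc
  obtain ⟨g, -, φ, hφ, hconv⟩ := hcomp.tendsto_subseq hu
  rw [tendsto_pi_nhds] at hconv
  have hptwise : ∀ m, Tendsto (fun n => ⟪x m, x (φ n)⟫) atTop (𝓝 (g m)) := fun m => hconv m
  -- the set of y for which ⟪y, x (φ n)⟫ converges is a submodule
  set W : Submodule ℝ H :=
    { carrier := {y | ∃ l : ℝ, Tendsto (fun n => ⟪y, x (φ n)⟫) atTop (𝓝 l)}
      add_mem' := by
        rintro a b ⟨la, hla⟩ ⟨lb, hlb⟩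
        exact ⟨la + lb, by simpa [inner_add_left] using hla.add hlb⟩
      zero_mem' := ⟨0, by simpa using tendsto_const_nhds⟩
      smul_mem' := by
        rintro c a ⟨la, hla⟩
        exact ⟨c * la, by simpa [real_inner_smul_left] using hla.const_mul c⟩ } with hW_def
  have hWx : ∀ n, x n ∈ W := fun n => ⟨g n, hptwise n⟩
  have hspan : Submodule.span ℝ (Set.range x) ≤ W :=
    Submodule.span_le.mpr (by rintro - ⟨n, rfl⟩; exact hWx n)
  -- convergence on the closure K
  set K : Submodule ℝ H := (Submodule.span ℝ (Set.range x)).topologicalClosure with hK_def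
  haveI : CompleteSpace K := (Submodule.isClosed_topologicalClosure _).completeSpace_coe
  have hK : ∀ y ∈ K, ∃ l : ℝ, Tendsto (fun n => ⟪y, x (φ n)⟫) atTop (𝓝 l) := by
    intro y hy
    have hc : CauchySeq (fun n => ⟪y, x (φ n)⟫) := by
      rw [Metric.cauchySeq_iff]
      intro ε hε
      have hy' : y ∈ closure ((Submodule.span ℝ (Set.range x)) : Set H) := hy
      rw [Metric.mem_closure_iff] at hy'
      obtain ⟨y', hy'mem, hy'close⟩ := hy' (ε / (3 * (M + 1))) (by positivity)
      obtain ⟨l', hl'⟩ := hspan hy'mem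
      have hcs : CauchySeq (fun n => ⟪y', x (φ n)⟫) := hl'.cauchySeq
      rw [Metric.cauchySeq_iff] at hcs
      obtain ⟨N, hN⟩ := hcs (ε / 3) (by positivity)
      refine ⟨N, fun m hm n hn => ?_⟩
      have hclose : ∀ k, |⟪y, x (φ k)⟫ - ⟪y', x (φ k)⟫| ≤ ε / 3 := by
        intro k
        have : ⟪y, x (φ k)⟫ - ⟪y', x (φ k)⟫ = ⟪y - y', x (φ k)⟫ := by
          rw [inner_sub_left]
        rw [this]
        refine le_trans (abs_real_inner_le_norm _ _) ?_
        have h1 : ‖y - y'‖ * ‖x (φ k)‖ ≤ (ε / (3 * (M + 1))) * M := by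
          apply mul_le_mul (le_of_lt (by rwa [← dist_eq_norm])) (hM _) (norm_nonneg _)
          positivity
        refine le_trans h1 ?_
        rw [div_mul_eq_mul_div, div_le_div_iff₀ (by positivity) (by norm_num)]
        nlinarith [hε]
      have hd := hN m hm n hn
      have : dist ⟪y, x (φ m)⟫ ⟪y, x (φ n)⟫ ≤
          |⟪y, x (φ m)⟫ - ⟪y', x (φ m)⟫| + dist ⟪y', x (φ m)⟫ ⟪y', x (φ n)⟫
          + |⟪y', x (φ n)⟫ - ⟪y, x (φ n)⟫| := by
        rw [Real.dist_eq, Real.dist_eq]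
        have := abs_sub_abs_le_abs_sub (⟪y, x (φ m)⟫ - ⟪y, x (φ n)⟫) 0
        calc |⟪y, x (φ m)⟫ - ⟪y, x (φ n)⟫|
            = |(⟪y, x (φ m)⟫ - ⟪y', x (φ m)⟫) + (⟪y', x (φ m)⟫ - ⟪y', x (φ n)⟫)
              + (⟪y', x (φ n)⟫ - ⟪y, x (φ n)⟫)| := by ring_nf
          _ ≤ _ := by
              refine le_trans (abs_add_le _ _) ?_
              exact add_le_add_left (abs_add_le _ _) _
      have habs : |⟪y', x (φ n)⟫ - ⟪y, x (φ n)⟫| ≤ ε / 3 := by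
        rw [abs_sub_comm]; exact hclose n
      calc dist ⟪y, x (φ m)⟫ ⟪y, x (φ n)⟫ ≤ _ := this
        _ < ε / 3 + ε / 3 + ε / 3 := by
            have := hclose m
            linarith
        _ = ε := by ring
    exact cauchySeq_tendsto_of_complete hc
  -- all of H via orthogonal projection
  have hall : ∀ y : H, ∃ l : ℝ, Tendsto (fun n => ⟪y, x (φ n)⟫) atTop (𝓝 l) := by
    intro y
    have hxK : ∀ n, x n ∈ K :=
      fun n => Submodule.le_topologicalClosure _ (Submodule.subset_span ⟨n, rfl⟩)
    have hperp : y - ↑(K.orthogonalProjectionOnto y) ∈ Kᗮ :=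
      Submodule.sub_starProjection_mem_orthogonal (K := K) y
    have heq : ∀ n, ⟪y, x (φ n)⟫ = ⟪(↑(K.orthogonalProjectionOnto y) : H), x (φ n)⟫ := by
      intro n
      have h0 : ⟪y - ↑(K.orthogonalProjectionOnto y), x (φ n)⟫ = 0 := by
        rw [real_inner_comm]
        exact (Submodule.mem_orthogonal K _).mp hperp _ (hxK (φ n))
      have := inner_sub_left (𝕜 := ℝ) y (↑(K.orthogonalProjectionOnto y)) (x (φ n))
      rw [h0] at this
      linarith [this]
    obtain ⟨l, hl⟩ := hK _ (K.orthogonalProjectionOnto y).2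
    exact ⟨l, by simpa only [heq] using hl⟩
  -- build the limit functional
  choose L hL using hall
  have hmapadd : ∀ y z : H, L (y + z) = L y + L z := by
    intro y z
    refine tendsto_nhds_unique (hL (y + z)) ?_
    simpa [inner_add_left] using (hL y).add (hL z)
  have hmapsmul : ∀ (c : ℝ) (y : H), L (c • y) = c * L y := by
    intro c y
    refine tendsto_nhds_unique (hL (c • y)) ?_
    simpa [real_inner_smul_left] using (hL y).const_mul c
  have hbound : ∀ y : H, ‖L y‖ ≤ M * ‖y‖ := by
    intro y
    have h1 : Tendsto (fun n => |⟪y, x (φ n)⟫|) atTop (𝓝 |L y|) :=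
      (continuous_abs.tendsto _).comp (hL y)
    rw [Real.norm_eq_abs]
    refine le_of_tendsto h1 (Filter.Eventually.of_forall fun n => ?_)
    refine le_trans (abs_real_inner_le_norm _ _) ?_
    rw [mul_comm]
    exact mul_le_mul_of_nonneg_right (hM _) (norm_nonneg y)
  set Llin : H →ₗ[ℝ] ℝ :=
    { toFun := L, map_add' := hmapadd, map_smul' := hmapsmul } with hLlin
  set Lcl : H →L[ℝ] ℝ := Llin.mkContinuous M (fun y => hbound y) with hLcl
  refine ⟨φ, hφ, (InnerProductSpace.toDual ℝ H).symm Lcl, fun y => ?_⟩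
  have : ⟪y, (InnerProductSpace.toDual ℝ H).symm Lcl⟫ = Lcl y := by
    rw [real_inner_comm]
    exact InnerProductSpace.toDual_symm_apply
  rw [this]
  exact hL y

set_option maxHeartbeats 1000000 in
lemma key_sub (A : H →L[ℝ] H) (hsa : IsSelfAdjoint A)
    (γbar : ℝ) (hγbar : 0 < γbar)
    (hA : ∀ u : H, γbar * ‖u‖ ^ 2 ≤ ⟪A u, u⟫)
    (f : H → H) (α : ℝ) (hα : α ∈ Set.Ioo (0 : ℝ) 1)
    (hf : ∀ u v : H, ‖f u - f v‖ ≤ α * ‖u - v‖)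
    (γ : ℝ) (hγ : 0 < γ ∧ γ < γbar / α)
    (T : H → H) (hT : ∀ u v : H, ‖T u - T v‖ ≤ ‖u - v‖)
    (p : H) (hp : T p = p)
    (xt : ℝ → H)
    (hxt : ∀ t ∈ Set.Ioo (0 : ℝ) ‖A‖⁻¹,
      xt t = (t * γ) • f (xt t) + (T (xt t) - t • A (T (xt t))))
    (u : ℕ → ℝ) (hu : ∀ n, u n ∈ Set.Ioo (0 : ℝ) ‖A‖⁻¹)
    (hu0 : Tendsto u atTop (𝓝 0)) :
    ∃ φ : ℕ → ℕ, StrictMono φ ∧ ∃ q : H, T q = q ∧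
      Tendsto (fun n => xt (u (φ n))) atTop (𝓝 q) ∧
      ∀ z : H, T z = z → ⟪A q - γ • f q, q - z⟫ ≤ 0 := by
  -- basic positivity facts
  have hα0 := hα.1
  have hα1 := hα.2
  have hγ0 := hγ.1
  have hβ : 0 < γbar - γ * α := by
    have := (lt_div_iff₀ hα0).mp hγ.2
    linarith
  have hAinv : 0 < ‖A‖⁻¹ := lt_trans (hu 0).1 (hu 0).2
  have hAn : 0 < ‖A‖ := inv_pos.mp hAinv
  have hnt : Nontrivial H := by
    rcases subsingleton_or_nontrivial H with hs | hnt
    · exfalso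
      have : A = 0 := ContinuousLinearMap.ext fun w => Subsingleton.elim _ _
      rw [this, norm_zero] at hAn
      exact lt_irrefl 0 hAn
    · exact hnt
  have hγbarA : γbar ≤ ‖A‖ := by
    obtain ⟨w₀, hw₀⟩ := exists_ne (0 : H)
    have h1 := hA w₀
    have h2 : ⟪A w₀, w₀⟫ ≤ ‖A w₀‖ * ‖w₀‖ := real_inner_le_norm _ _
    have h3 : ‖A w₀‖ ≤ ‖A‖ * ‖w₀‖ := A.le_opNorm w₀
    have h4 : 0 < ‖w₀‖ := norm_pos_iff.mpr hw₀
    nlinarith [mul_le_mul_of_nonneg_right h3 h4.le, mul_pos h4 h4]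
  have hsymA : ∀ a b : H, ⟪A a, b⟫ = ⟪a, A b⟫ :=
    fun a b => (ContinuousLinearMap.isSelfAdjoint_iff_isSymmetric.mp hsa) a b
  -- contraction factor bound for I - tA
  have hB : ∀ t ∈ Set.Ioo (0 : ℝ) ‖A‖⁻¹, ∀ w : H,
      ‖w - t • A w‖ ≤ (1 - t * γbar) * ‖w‖ := by
    intro t ht w
    obtain ⟨ht0, ht1⟩ := ht
    have htA : t * ‖A‖ < 1 := by
      rw [inv_eq_one_div] at ht1
      exact (lt_div_iff₀ hAn).mp ht1
    set B : H →L[ℝ] H := ContinuousLinearMap.id ℝ H - t • A with hBdef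
    have hBap : ∀ w : H, B w = w - t • A w := fun w => rfl
    have hsymB : ∀ a b : H, ⟪B a, b⟫ = ⟪a, B b⟫ := by
      intro a b
      rw [hBap, hBap, inner_sub_left, inner_sub_right,
        real_inner_smul_left, real_inner_smul_right, hsymA]
    have hAub : ∀ w : H, ⟪A w, w⟫ ≤ ‖A‖ * ‖w‖ ^ 2 := by
      intro w
      have h2 : ⟪A w, w⟫ ≤ ‖A w‖ * ‖w‖ := real_inner_le_norm _ _
      have h3 : ‖A w‖ ≤ ‖A‖ * ‖w‖ := A.le_opNorm w
      nlinarith [norm_nonneg w, norm_nonneg (A w)]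
    have h0 : ∀ w : H, 0 ≤ ⟪B w, w⟫ := by
      intro w
      rw [hBap, inner_sub_left, real_inner_smul_left, real_inner_self_eq_norm_sq]
      nlinarith [hAub w, sq_nonneg ‖w‖, hAub w, mul_le_mul_of_nonneg_left (hAub w) ht0.le,
        norm_nonneg w]
    have hc : ∀ w : H, ⟪B w, w⟫ ≤ (1 - t * γbar) * ‖w‖ ^ 2 := by
      intro w
      rw [hBap, inner_sub_left, real_inner_smul_left, real_inner_self_eq_norm_sq]
      nlinarith [hA w, mul_le_mul_of_nonneg_left (hA w) ht0.le]
    have hc0 : (0 : ℝ) ≤ 1 - t * γbar := by nlinarith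
    have := norm_le_of_form B hsymB h0 hc0 hc w
    rwa [hBap] at this
  set N : ℝ := ‖γ • f p - A p‖ with hN
  set M₀ : ℝ := N / (γbar - γ * α) with hM₀
  have hN0 : 0 ≤ N := norm_nonneg _
  have hM₀0 : 0 ≤ M₀ := div_nonneg hN0 hβ.le
  -- uniform boundedness
  have hbound : ∀ t ∈ Set.Ioo (0 : ℝ) ‖A‖⁻¹, ‖xt t - p‖ ≤ M₀ := by
    intro t ht
    obtain ⟨ht0, ht1⟩ := ht
    have heq := hxt t ⟨ht0, ht1⟩
    set x := xt t with hx
    set y := T x with hy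
    have htA : t * ‖A‖ < 1 := by
      rw [inv_eq_one_div] at ht1
      exact (lt_div_iff₀ hAn).mp ht1
    have htγ : (0:ℝ) ≤ 1 - t * γbar := by nlinarith
    have hid : x - p = (t * γ) • (f x - f p) + t • (γ • f p - A p)
        + ((y - p) - t • A (y - p)) := by
      rw [map_sub]
      conv_lhs => rw [heq]
      module
    have h1 : ‖x - p‖ ≤ (t * γ) * ‖f x - f p‖ + t * N + (1 - t * γbar) * ‖y - p‖ := by
      rw [hid]
      refine le_trans (norm_add_le _ _) ?_
      refine add_le_add (le_trans (norm_add_le _ _) (add_le_add ?_ ?_)) ?_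
      · rw [norm_smul, Real.norm_eq_abs, abs_of_nonneg (by positivity)]
      · rw [norm_smul, Real.norm_eq_abs, abs_of_nonneg ht0.le]
      · exact hB t ⟨ht0, ht1⟩ (y - p)
    have h2 : ‖f x - f p‖ ≤ α * ‖x - p‖ := hf x p
    have h3 : ‖y - p‖ ≤ ‖x - p‖ := by
      calc ‖y - p‖ = ‖T x - T p‖ := by rw [hp]
        _ ≤ ‖x - p‖ := hT x p
    have h4 : (t * (γbar - γ * α)) * ‖x - p‖ ≤ t * N := by
      nlinarith [norm_nonneg (x - p), mul_le_mul_of_nonneg_left h2 (by positivity : (0:ℝ) ≤ t * γ),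
        mul_le_mul_of_nonneg_left h3 htγ]
    have h5 : (γbar - γ * α) * ‖x - p‖ ≤ N := by
      have := (mul_le_mul_iff_right₀ ht0).mp (by linarith [h4] : t * ((γbar - γ * α) * ‖x - p‖) ≤ t * N)
      exact this
    rw [hM₀, le_div_iff₀ hβ]
    linarith [h5]
  have hM₁ : ∀ t ∈ Set.Ioo (0 : ℝ) ‖A‖⁻¹, ‖xt t‖ ≤ M₀ + ‖p‖ := by
    intro t ht
    calc ‖xt t‖ = ‖(xt t - p) + p‖ := by rw [sub_add_cancel]
      _ ≤ ‖xt t - p‖ + ‖p‖ := norm_add_le _ _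
      _ ≤ M₀ + ‖p‖ := add_le_add_left (hbound t ht) _
  set C : ℝ := γ * (α * M₀ + ‖f p‖) + ‖A‖ * (M₀ + ‖p‖) with hC
  have hC0 : 0 ≤ C := by positivity
  -- ‖x_t - T x_t‖ ≤ t C
  have hdiff : ∀ t ∈ Set.Ioo (0 : ℝ) ‖A‖⁻¹, ‖xt t - T (xt t)‖ ≤ t * C := by
    intro t ht
    have heq := hxt t ht
    set x := xt t with hx
    set y := T x with hy
    have hid : x - y = t • (γ • f x - A y) := by
      conv_lhs => rw [heq]
      module
    have hfx : ‖f x‖ ≤ α * M₀ + ‖f p‖ := by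
      calc ‖f x‖ = ‖(f x - f p) + f p‖ := by rw [sub_add_cancel]
        _ ≤ ‖f x - f p‖ + ‖f p‖ := norm_add_le _ _
        _ ≤ α * ‖x - p‖ + ‖f p‖ := add_le_add_left (hf x p) _
        _ ≤ α * M₀ + ‖f p‖ := by
            have := hbound t ht
            nlinarith
    have hyb : ‖y‖ ≤ M₀ + ‖p‖ := by
      calc ‖y‖ = ‖(T x - T p) + p‖ := by rw [hp, sub_add_cancel]
        _ ≤ ‖T x - T p‖ + ‖p‖ := norm_add_le _ _
        _ ≤ ‖x - p‖ + ‖p‖ := add_le_add_left (hT x p) _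
        _ ≤ M₀ + ‖p‖ := add_le_add_left (hbound t ht) _
    rw [hid, norm_smul, Real.norm_eq_abs, abs_of_nonneg ht.1.le]
    have : ‖γ • f x - A y‖ ≤ C := by
      calc ‖γ • f x - A y‖ ≤ ‖γ • f x‖ + ‖A y‖ := norm_sub_le _ _
        _ ≤ γ * (α * M₀ + ‖f p‖) + ‖A‖ * (M₀ + ‖p‖) := by
            refine add_le_add ?_ ?_
            · rw [norm_smul, Real.norm_eq_abs, abs_of_nonneg hγ0.le]
              exact mul_le_mul_of_nonneg_left hfx hγ0.le
            · exact le_trans (A.le_opNorm y) (mul_le_mul_of_nonneg_left hyb (norm_nonneg _))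
    exact mul_le_mul_of_nonneg_left this ht.1.le
  -- key inequality (*)
  have hstar : ∀ t ∈ Set.Ioo (0 : ℝ) ‖A‖⁻¹, ∀ z : H, T z = z →
      (γbar - γ * α) * ‖xt t - z‖ ^ 2 ≤ ⟪γ • f z - A z, xt t - z⟫ := by
    intro t ht z hz
    obtain ⟨ht0, ht1⟩ := ht
    have heq := hxt t ⟨ht0, ht1⟩
    set x := xt t with hx
    set y := T x with hy
    have hid : x - z = t • (γ • f x - A z) + ((y - z) - t • A (y - z)) := by
      rw [map_sub]
      conv_lhs => rw [heq]
      module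
    have hyz : ‖y - z‖ ≤ ‖x - z‖ := by
      calc ‖y - z‖ = ‖T x - T z‖ := by rw [hz]
        _ ≤ ‖x - z‖ := hT x z
    have htA : (0:ℝ) ≤ 1 - t * γbar := by
      have : t * ‖A‖ < 1 := by
        rw [inv_eq_one_div] at ht1
        exact (lt_div_iff₀ hAn).mp ht1
      nlinarith
    have hinner : ‖x - z‖ ^ 2 = t * ⟪γ • f x - A z, x - z⟫
        + ⟪(y - z) - t • A (y - z), x - z⟫ := by
      calc ‖x - z‖ ^ 2 = ⟪x - z, x - z⟫ := (real_inner_self_eq_norm_sq _).symm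
        _ = ⟪t • (γ • f x - A z) + ((y - z) - t • A (y - z)), x - z⟫ := by rw [← hid]
        _ = _ := by rw [inner_add_left, real_inner_smul_left]
    have h2 : ⟪(y - z) - t • A (y - z), x - z⟫ ≤ (1 - t * γbar) * ‖x - z‖ ^ 2 := by
      calc ⟪(y - z) - t • A (y - z), x - z⟫ ≤ ‖(y - z) - t • A (y - z)‖ * ‖x - z‖ :=
            real_inner_le_norm _ _
        _ ≤ ((1 - t * γbar) * ‖y - z‖) * ‖x - z‖ :=
            mul_le_mul_of_nonneg_right (hB t ⟨ht0, ht1⟩ (y - z)) (norm_nonneg _)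
        _ ≤ (1 - t * γbar) * ‖x - z‖ ^ 2 := by
            nlinarith [mul_le_mul_of_nonneg_left
              (mul_le_mul_of_nonneg_right hyz (norm_nonneg (x - z))) htA]
    have h3 : ⟪γ • f x - A z, x - z⟫ ≤ γ * α * ‖x - z‖ ^ 2 + ⟪γ • f z - A z, x - z⟫ := by
      have hid2 : γ • f x - A z = γ • (f x - f z) + (γ • f z - A z) := by module
      rw [hid2, inner_add_left, real_inner_smul_left]
      have : ⟪f x - f z, x - z⟫ ≤ α * ‖x - z‖ ^ 2 := by
        calc ⟪f x - f z, x - z⟫ ≤ ‖f x - f z‖ * ‖x - z‖ := real_inner_le_norm _ _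
          _ ≤ (α * ‖x - z‖) * ‖x - z‖ :=
              mul_le_mul_of_nonneg_right (hf x z) (norm_nonneg _)
          _ = α * ‖x - z‖ ^ 2 := by ring
      nlinarith [this]
    have h4 : t * ((γbar - γ * α) * ‖x - z‖ ^ 2) ≤ t * ⟪γ • f z - A z, x - z⟫ := by
      nlinarith [mul_le_mul_of_nonneg_left h3 ht0.le]
    exact le_of_mul_le_mul_left (by linarith [h4]) ht0
  -- inequality towards the variational inequality
  have hVIt : ∀ t ∈ Set.Ioo (0 : ℝ) ‖A‖⁻¹, ∀ z : H, T z = z →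
      ⟪A (xt t) - γ • f (xt t), xt t - z⟫ ≤ ‖A‖ * (t * C) * ‖xt t - z‖ := by
    intro t ht z hz
    obtain ⟨ht0, ht1⟩ := ht
    have heq := hxt t ⟨ht0, ht1⟩
    set x := xt t with hx
    set y := T x with hy
    have hid : x - y = t • (γ • f x - A y) := by
      conv_lhs => rw [heq]
      module
    have h1 : (1 / t) • (x - y) = γ • f x - A y := by
      rw [hid, smul_smul, one_div_mul_cancel ht0.ne', one_smul]
    have h2 : A x - γ • f x = A (x - y) - (1 / t) • (x - y) := by
      rw [map_sub, h1]
      module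
    have hmono : 0 ≤ ⟪x - y, x - z⟫ := by
      have hxy : x - y = (x - z) - (y - z) := by module
      rw [hxy, inner_sub_left, real_inner_self_eq_norm_sq]
      have hyz : ‖y - z‖ ≤ ‖x - z‖ := by
        calc ‖y - z‖ = ‖T x - T z‖ := by rw [hz]
          _ ≤ ‖x - z‖ := hT x z
      have := real_inner_le_norm (y - z) (x - z)
      nlinarith [norm_nonneg (x - z), norm_nonneg (y - z)]
    have h3 : ⟪A (x - y), x - z⟫ ≤ ‖A‖ * (t * C) * ‖x - z‖ := by
      calc ⟪A (x - y), x - z⟫ ≤ ‖A (x - y)‖ * ‖x - z‖ := real_inner_le_norm _ _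
        _ ≤ (‖A‖ * ‖x - y‖) * ‖x - z‖ :=
            mul_le_mul_of_nonneg_right (A.le_opNorm _) (norm_nonneg _)
        _ ≤ ‖A‖ * (t * C) * ‖x - z‖ := by
            have := hdiff t ⟨ht0, ht1⟩
            have h5 : ‖x - y‖ ≤ t * C := this
            nlinarith [mul_le_mul_of_nonneg_right
              (mul_le_mul_of_nonneg_left h5 (norm_nonneg A)) (norm_nonneg (x - z))]
    calc ⟪A x - γ • f x, x - z⟫
        = ⟪A (x - y), x - z⟫ - (1 / t) * ⟪x - y, x - z⟫ := by
          rw [h2, inner_sub_left, real_inner_smul_left]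
      _ ≤ ⟪A (x - y), x - z⟫ := by
          have : 0 ≤ (1 / t) * ⟪x - y, x - z⟫ := mul_nonneg (by positivity) hmono
          linarith
      _ ≤ _ := h3
  -- now the sequence argument
  set xs : ℕ → H := fun n => xt (u n) with hxs
  have hxsb : ∀ n, ‖xs n‖ ≤ M₀ + ‖p‖ := fun n => hM₁ _ (hu n)
  obtain ⟨φ, hφ, q, hweak⟩ := weak_subseq xs (M₀ + ‖p‖) hxsb
  have hun : Tendsto (fun n => u (φ n)) atTop (𝓝 0) := hu0.comp hφ.tendsto_atTop
  set e : ℕ → ℝ := fun n => ‖xs (φ n) - T (xs (φ n))‖ with he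
  have he0 : ∀ n, 0 ≤ e n := fun n => norm_nonneg _
  have heC : ∀ n, e n ≤ u (φ n) * C := fun n => hdiff _ (hu (φ n))
  have he_lim : Tendsto e atTop (𝓝 0) := by
    have h1 : Tendsto (fun n => u (φ n) * C) atTop (𝓝 0) := by
      simpa using hun.mul_const C
    exact tendsto_of_tendsto_of_tendsto_of_le_of_le tendsto_const_nhds h1 he0 heC
  -- q is a fixed point (demiclosedness)
  have hTq : T q = q := by
    set d : H := q - T q with hd
    have hqb : ∀ n, ‖xs (φ n) - q‖ ≤ M₀ + ‖p‖ + ‖q‖ := by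
      intro n
      calc ‖xs (φ n) - q‖ ≤ ‖xs (φ n)‖ + ‖q‖ := norm_sub_le _ _
        _ ≤ M₀ + ‖p‖ + ‖q‖ := add_le_add_left (hxsb (φ n)) _
    have key : ∀ n, ‖d‖ ^ 2 ≤ e n ^ 2 + 2 * e n * (M₀ + ‖p‖ + ‖q‖)
        + 2 * (⟪d, q⟫ - ⟪d, xs (φ n)⟫) := by
      intro n
      set w := xs (φ n) with hw
      have h1 : ‖w - T q‖ ≤ e n + ‖w - q‖ := by
        calc ‖w - T q‖ = ‖(w - T w) + (T w - T q)‖ := by rw [sub_add_sub_cancel]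
          _ ≤ ‖w - T w‖ + ‖T w - T q‖ := norm_add_le _ _
          _ ≤ e n + ‖w - q‖ := add_le_add le_rfl (hT w q)
      have h2 : ‖w - T q‖ ^ 2 = ‖w - q‖ ^ 2 + 2 * ⟪w - q, d⟫ + ‖d‖ ^ 2 := by
        have : w - T q = (w - q) + d := by rw [hd]; module
        rw [this, norm_add_sq_real]
      have h3 : ⟪w - q, d⟫ = ⟪d, w⟫ - ⟪d, q⟫ := by
        rw [real_inner_comm, inner_sub_right]
      have h4 : ‖w - T q‖ ^ 2 ≤ (e n + ‖w - q‖) ^ 2 := by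
        nlinarith [norm_nonneg (w - T q), norm_nonneg (w - q), he0 n, h1]
      nlinarith [hqb n, he0 n, norm_nonneg (w - q)]
    have hrhs : Tendsto (fun n => e n ^ 2 + 2 * e n * (M₀ + ‖p‖ + ‖q‖)
        + 2 * (⟪d, q⟫ - ⟪d, xs (φ n)⟫)) atTop (𝓝 0) := by
      have h1 : Tendsto (fun n => e n ^ 2) atTop (𝓝 0) := by
        simpa [pow_two] using (he_lim.mul he_lim)
      have h2 : Tendsto (fun n => 2 * e n * (M₀ + ‖p‖ + ‖q‖)) atTop (𝓝 0) := by
        simpa using ((he_lim.const_mul 2).mul_const (M₀ + ‖p‖ + ‖q‖))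
      have h3 : Tendsto (fun n => 2 * (⟪d, q⟫ - ⟪d, xs (φ n)⟫)) atTop (𝓝 0) := by
        have := (tendsto_const_nhds (x := ⟪d, q⟫) (f := atTop (α := ℕ))).sub (hweak d)
        simpa using this.const_mul 2
      simpa using (h1.add h2).add h3
    have hd2 : ‖d‖ ^ 2 ≤ 0 := ge_of_tendsto hrhs (Filter.Eventually.of_forall key)
    have : d = 0 := by
      have := norm_nonneg d
      have hnd : ‖d‖ = 0 := by nlinarith
      exact norm_eq_zero.mp hnd
    rw [hd] at this
    have := sub_eq_zero.mp this
    exact this.symm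
  -- strong convergence of the subsequence
  have hstrong : Tendsto (fun n => xs (φ n)) atTop (𝓝 q) := by
    set v : H := γ • f q - A q with hv
    have h1 : ∀ n, (γbar - γ * α) * ‖xs (φ n) - q‖ ^ 2 ≤ ⟪v, xs (φ n)⟫ - ⟪v, q⟫ := by
      intro n
      have := hstar _ (hu (φ n)) q hTq
      rwa [show ⟪v, xs (φ n) - q⟫ = ⟪v, xs (φ n)⟫ - ⟪v, q⟫ from inner_sub_right _ _ _] at this
    have h2 : Tendsto (fun n => ⟪v, xs (φ n)⟫ - ⟪v, q⟫) atTop (𝓝 0) := by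
      have := (hweak v).sub (tendsto_const_nhds (x := ⟪v, q⟫) (f := atTop (α := ℕ)))
      simpa using this
    have h3 : Tendsto (fun n => ‖xs (φ n) - q‖ ^ 2) atTop (𝓝 0) := by
      have hub : ∀ n, ‖xs (φ n) - q‖ ^ 2 ≤ (⟪v, xs (φ n)⟫ - ⟪v, q⟫) / (γbar - γ * α) := by
        intro n
        rw [le_div_iff₀ hβ]
        linarith [h1 n]
      have hlb : ∀ n, (0:ℝ) ≤ ‖xs (φ n) - q‖ ^ 2 := fun n => sq_nonneg _
      have h4 : Tendsto (fun n => (⟪v, xs (φ n)⟫ - ⟪v, q⟫) / (γbar - γ * α)) atTop (𝓝 0) := by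
        simpa using h2.div_const (γbar - γ * α)
      exact tendsto_of_tendsto_of_tendsto_of_le_of_le tendsto_const_nhds h4 hlb hub
    have h5 : Tendsto (fun n => ‖xs (φ n) - q‖) atTop (𝓝 0) := by
      have := (Real.continuous_sqrt.tendsto 0).comp h3
      simpa [Function.comp_def, Real.sqrt_sq (norm_nonneg _)] using this
    rw [tendsto_iff_norm_sub_tendsto_zero]
    exact h5
  -- the variational inequality
  refine ⟨φ, hφ, q, hTq, hstrong, ?_⟩
  intro z hz
  have hineq : ∀ n, ⟪A (xs (φ n)) - γ • f (xs (φ n)), xs (φ n) - z⟫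
      ≤ ‖A‖ * (u (φ n) * C) * (M₀ + ‖p‖ + ‖z‖) := by
    intro n
    refine le_trans (hVIt _ (hu (φ n)) z hz) ?_
    have hb : ‖xs (φ n) - z‖ ≤ M₀ + ‖p‖ + ‖z‖ := by
      calc ‖xs (φ n) - z‖ ≤ ‖xs (φ n)‖ + ‖z‖ := norm_sub_le _ _
        _ ≤ M₀ + ‖p‖ + ‖z‖ := add_le_add_left (hxsb (φ n)) _
    have hpos : 0 ≤ ‖A‖ * (u (φ n) * C) :=
      mul_nonneg (norm_nonneg _) (mul_nonneg (hu (φ n)).1.le hC0)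
    exact mul_le_mul_of_nonneg_left hb hpos
  have hfq : Tendsto (fun n => f (xs (φ n))) atTop (𝓝 (f q)) := by
    rw [tendsto_iff_norm_sub_tendsto_zero]
    have hub : ∀ n, ‖f (xs (φ n)) - f q‖ ≤ α * ‖xs (φ n) - q‖ := fun n => hf _ _
    have h1 : Tendsto (fun n => α * ‖xs (φ n) - q‖) atTop (𝓝 0) := by
      have := tendsto_iff_norm_sub_tendsto_zero.mp hstrong
      simpa using this.const_mul α
    exact tendsto_of_tendsto_of_tendsto_of_le_of_le tendsto_const_nhds h1
      (fun n => norm_nonneg _) hub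
  have hlhs : Tendsto (fun n => ⟪A (xs (φ n)) - γ • f (xs (φ n)), xs (φ n) - z⟫)
      atTop (𝓝 ⟪A q - γ • f q, q - z⟫) := by
    have hA' : Tendsto (fun n => A (xs (φ n))) atTop (𝓝 (A q)) :=
      (A.continuous.tendsto q).comp hstrong
    have h1 : Tendsto (fun n => A (xs (φ n)) - γ • f (xs (φ n))) atTop
        (𝓝 (A q - γ • f q)) := hA'.sub (hfq.const_smul γ)
    have h2 : Tendsto (fun n => xs (φ n) - z) atTop (𝓝 (q - z)) :=
      hstrong.sub tendsto_const_nhds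
    exact h1.inner h2
  have hrhs : Tendsto (fun n => ‖A‖ * (u (φ n) * C) * (M₀ + ‖p‖ + ‖z‖)) atTop (𝓝 0) := by
    have h1 : Tendsto (fun n => u (φ n) * C) atTop (𝓝 0) := by
      simpa using hun.mul_const C
    have := (h1.const_mul ‖A‖).mul_const (M₀ + ‖p‖ + ‖z‖)
    simpa using this
  exact le_of_tendsto_of_tendsto' hlhs hrhs hineq

end AuxVisc

set_option maxHeartbeats 1000000 in
theorem stmt_18 {H : Type*} [NormedAddCommGroup H] [InnerProductSpace ℝ H]
    [CompleteSpace H]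
    (A : H →L[ℝ] H) (hsa : IsSelfAdjoint A)
    (γbar : ℝ) (hγbar : 0 < γbar)
    (hA : ∀ u : H, γbar * ‖u‖ ^ 2 ≤ ⟪A u, u⟫)
    (f : H → H) (α : ℝ) (hα : α ∈ Set.Ioo (0 : ℝ) 1)
    (hf : ∀ u v : H, ‖f u - f v‖ ≤ α * ‖u - v‖)
    (γ : ℝ) (hγ : 0 < γ ∧ γ < γbar / α)
    (T : H → H) (hT : ∀ u v : H, ‖T u - T v‖ ≤ ‖u - v‖)
    (hFT : ∃ u : H, T u = u)
    (xt : ℝ → H)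
    (hxt : ∀ t ∈ Set.Ioo (0 : ℝ) ‖A‖⁻¹,
      xt t = (t * γ) • f (xt t) + (T (xt t) - t • A (T (xt t)))) :
    ∃ xbar : H, T xbar = xbar ∧
      Tendsto xt (nhdsWithin 0 (Set.Ioi 0)) (nhds xbar) ∧
      ∀ z : H, T z = z → ⟪A xbar - γ • f xbar, xbar - z⟫ ≤ 0 := by
  obtain ⟨p, hp⟩ := hFT
  have hα0 := hα.1
  have hγ0 := hγ.1
  have hβ : 0 < γbar - γ * α := by
    have := (lt_div_iff₀ hα0).mp hγ.2
    linarith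
  rcases subsingleton_or_nontrivial H with hs | hnt
  · refine ⟨p, hp, ?_, ?_⟩
    · have hxt' : xt = fun _ => p := funext fun t => Subsingleton.elim _ _
      rw [hxt']
      exact tendsto_const_nhds
    · intro z hz
      have h0 : A p - γ • f p = (0 : H) := Subsingleton.elim _ _
      rw [h0, inner_zero_left]
  · have hAn : 0 < ‖A‖ := by
      obtain ⟨w₀, hw₀⟩ := exists_ne (0 : H)
      have h1 := hA w₀
      have h2 : ⟪A w₀, w₀⟫ ≤ ‖A w₀‖ * ‖w₀‖ := real_inner_le_norm _ _
      have h3 : ‖A w₀‖ ≤ ‖A‖ * ‖w₀‖ := A.le_opNorm w₀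
      have h4 : 0 < ‖w₀‖ := norm_pos_iff.mpr hw₀
      nlinarith [mul_le_mul_of_nonneg_right h3 h4.le, mul_pos h4 h4, norm_nonneg A]
    have hAinv : 0 < ‖A‖⁻¹ := inv_pos.mpr hAn
    set s : ℕ → ℝ := fun n => ‖A‖⁻¹ / (n + 2) with hs_def
    have hs : ∀ n, s n ∈ Set.Ioo (0 : ℝ) ‖A‖⁻¹ := by
      intro n
      constructor
      · positivity
      · rw [hs_def]
        simp only
        rw [div_lt_iff₀ (by positivity)]
        have hn : (0:ℝ) ≤ (n:ℝ) := Nat.cast_nonneg n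
        nlinarith
    have hs0 : Tendsto s atTop (𝓝 0) :=
      tendsto_const_nhds.div_atTop
        (tendsto_atTop_add_const_right _ 2 tendsto_natCast_atTop_atTop)
    obtain ⟨φ₀, hφ₀, xb, hTxb, hconv0, hVIxb⟩ :=
      key_sub A hsa γbar hγbar hA f α hα hf γ hγ T hT p hp xt hxt s hs hs0
    have huniq : ∀ y : H, T y = y →
        (∀ z : H, T z = z → ⟪A y - γ • f y, y - z⟫ ≤ 0) → y = xb := by
      intro y hy hVIy
      have h1 := hVIy xb hTxb
      have h2 := hVIxb y hy
      have hsum : ⟪A y - γ • f y, y - xb⟫ + ⟪A xb - γ • f xb, xb - y⟫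
          = ⟪A (y - xb), y - xb⟫ - γ * ⟪f y - f xb, y - xb⟫ := by
        rw [show xb - y = -(y - xb) by module, inner_neg_right]
        simp only [map_sub, inner_sub_left, inner_sub_right, real_inner_smul_left]
        ring
      have h3 : ⟪f y - f xb, y - xb⟫ ≤ α * ‖y - xb‖ ^ 2 := by
        calc ⟪f y - f xb, y - xb⟫ ≤ ‖f y - f xb‖ * ‖y - xb‖ := real_inner_le_norm _ _
          _ ≤ (α * ‖y - xb‖) * ‖y - xb‖ :=
              mul_le_mul_of_nonneg_right (hf y xb) (norm_nonneg _)
          _ = α * ‖y - xb‖ ^ 2 := by ring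
      have h4 := hA (y - xb)
      have h5 : (γbar - γ * α) * ‖y - xb‖ ^ 2 ≤ 0 := by
        nlinarith [mul_le_mul_of_nonneg_left h3 hγ0.le]
      have h6 : ‖y - xb‖ ^ 2 = 0 := by
        have h7 : (γbar - γ * α) * ‖y - xb‖ ^ 2 ≤ (γbar - γ * α) * 0 := by linarith
        have h8 := (mul_le_mul_iff_right₀ hβ).mp h7
        exact le_antisymm h8 (sq_nonneg _)
      have h9 : ‖y - xb‖ = 0 := by
        have := sq_eq_zero_iff.mp h6
        exact this
      have := norm_eq_zero.mp h9
      rw [sub_eq_zero] at this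
      exact this
    refine ⟨xb, hTxb, ?_, hVIxb⟩
    rw [tendsto_iff_seq_tendsto]
    intro v hv
    apply tendsto_of_subseq_tendsto
    intro ns hns
    have hw : Tendsto (fun n => v (ns n)) atTop (𝓝[>] (0:ℝ)) := hv.comp hns
    have hw0 : Tendsto (fun n => v (ns n)) atTop (𝓝 0) := hw.mono_right nhdsWithin_le_nhds
    have hmem : ∀ᶠ n in atTop, v (ns n) ∈ Set.Ioo (0 : ℝ) ‖A‖⁻¹ := by
      have h1 : ∀ᶠ n in atTop, v (ns n) ∈ Set.Ioi (0:ℝ) := hw self_mem_nhdsWithin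
      have h2 : ∀ᶠ n in atTop, v (ns n) < ‖A‖⁻¹ := hw0.eventually (gt_mem_nhds hAinv)
      filter_upwards [h1, h2] with n hn1 hn2
      exact ⟨hn1, hn2⟩
    obtain ⟨Nn, hNn⟩ := eventually_atTop.mp hmem
    set w : ℕ → ℝ := fun n => v (ns (n + Nn)) with hw_def
    have hwmem : ∀ n, w n ∈ Set.Ioo (0 : ℝ) ‖A‖⁻¹ := fun n => hNn _ (Nat.le_add_left _ _)
    have hwlim : Tendsto w atTop (𝓝 0) := hw0.comp (tendsto_add_atTop_nat Nn)
    obtain ⟨ψ, hψ, xb', hTxb', hconv', hVI'⟩ :=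
      key_sub A hsa γbar hγbar hA f α hα hf γ hγ T hT p hp xt hxt w hwmem hwlim
    have hxbeq : xb' = xb := huniq xb' hTxb' hVI'
    refine ⟨fun n => ψ n + Nn, ?_⟩
    rw [← hxbeq]
    exact hconv'
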